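/- Let $N\geq 2$, $m\geq 3$, and let $(a,b)$ satisfy $N(m-2)/(2m-3) < a < N/2$, $2(m-1)/(N+(2m-3)a) < b \leq 2m/(N+(2m-1)a)$, and $b < 2/N$. Then for every integer $k$ with $|k| \leq m-1$ and every $x \in [-a/2, 0]$, one has $-N/2 < x + \frac{k}{b} - ka < N/2$. -/

import Mathlib

theorem stmt_3 (N a b : ℝ) (m : ℕ) (hN : 2 ≤ N) (hm : 3 ≤ m)
    (ha1 : N * (m - 2) / (2 * m - 3) < a) (ha2 : a < N / 2)
    (hb1 : 2 * (m - 1) / (N + (2 * m - 3) * a) < b)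
    (hb2 : b ≤ 2 * m / (N + (2 * m - 1) * a))
    (hb3 : b < 2 / N) :
    ∀ k : ℤ, |k| ≤ (m : ℤ) - 1 →
      ∀ x ∈ Set.Icc (-(a / 2)) (0 : ℝ),
        -(N / 2) < x + (k : ℝ) / b - k * a ∧ x + (k : ℝ) / b - k * a < N / 2 := by
  have hm3 : (3:ℝ) ≤ (m:ℝ) := by exact_mod_cast hm
  have hN0 : (0:ℝ) < N := by linarith
  have ha0 : 0 < a := lt_trans (div_pos (by nlinarith) (by linarith)) ha1
  have hD1 : 0 < N + (2 * m - 3) * a := by nlinarith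
  have hD2 : 0 < N + (2 * m - 1) * a := by nlinarith
  have hb0 : 0 < b := lt_trans (div_pos (by nlinarith) hD1) hb1
  have hkey1 : 2 * ((m:ℝ) - 1) < b * (N + (2 * m - 3) * a) := (div_lt_iff₀ hD1).mp hb1
  have hkey2 : b * (N + (2 * m - 1) * a) ≤ 2 * (m:ℝ) := (le_div_iff₀ hD2).mp hb2
  have hNa : 0 < N - a := by linarith
  have h2m : (0:ℝ) < 2 * (m:ℝ) := by linarith
  have hmul : 0 < 2 * (m:ℝ) * (1 - a * b) := by nlinarith [mul_pos hb0 hNa]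
  have hab : 0 < 1 - a * b := by nlinarith
  have hcform : 1 / b - a = (1 - a * b) / b := by field_simp
  have hc0 : 0 < 1 / b - a := by rw [hcform]; exact div_pos hab hb0
  have h5 : 2 * ((m:ℝ) - 1) * (1 - a * b) < (N - a) * b := by nlinarith
  have hcup : ((m:ℝ) - 1) * (1 / b - a) < (N - a) / 2 := by
    rw [hcform, mul_div_assoc']
    rw [div_lt_div_iff₀ hb0 two_pos]
    linarith
  intro k hk x hx
  obtain ⟨hx1, hx2⟩ := hx
  have hk' : |(k:ℝ)| ≤ (m:ℝ) - 1 := by exact_mod_cast hk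
  have habs : |(k:ℝ) * (1 / b - a)| ≤ ((m:ℝ) - 1) * (1 / b - a) := by
    rw [abs_mul, abs_of_pos hc0]
    exact mul_le_mul_of_nonneg_right hk' hc0.le
  obtain ⟨h7, h8⟩ := abs_le.mp habs
  have hring : (k:ℝ) / b - k * a = (k:ℝ) * (1 / b - a) := by ring
  rw [show x + (k:ℝ) / b - k * a = x + ((k:ℝ) / b - k * a) from by ring, hring]
  constructor <;> linarith
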